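/- arXiv:1111.2712 — 2 statements merged into one kernel-verified Lean document; each statement's English description precedes it below -/
import Mathlib

section
/- Let N ≥ 5 be an integer and let β be a real number with 0 < β < N - 4. Then the integral ∫_{ℝ^N} |x|^β (1-|x|²)/(1+|x|²)^{N+1} dx converges absolutely and is strictly negative. -/
open MeasureTheory Set Real

private lemma aux_intOn (N : ℕ) (q : ℝ) (hq : 0 < q) (hq' : q < 2*N - 1) :
    IntegrableOn (fun y : ℝ => y ^ q * ((1 - y^2)/(1+y^2)^(N+1))) (Ioi (0:ℝ)) := by
  have hcont : ContinuousOn (fun y : ℝ => y ^ q * ((1 - y^2)/(1+y^2)^(N+1))) (Icc 0 1) := by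
    apply ContinuousOn.mul
    · exact fun y _ => (Real.continuousAt_rpow_const y q (Or.inr hq.le)).continuousWithinAt
    · apply ContinuousOn.div
      · fun_prop
      · fun_prop
      · intro y _; positivity
  have h1 : IntegrableOn (fun y : ℝ => y ^ q * ((1 - y^2)/(1+y^2)^(N+1))) (Ioc (0:ℝ) 1) :=
    (hcont.integrableOn_compact isCompact_Icc).mono_set Ioc_subset_Icc_self
  have h2 : IntegrableOn (fun y : ℝ => y ^ q * ((1 - y^2)/(1+y^2)^(N+1))) (Ioi (1:ℝ)) := by
    have hb : IntegrableOn (fun y : ℝ => 2 * y ^ (q - 2*N)) (Ioi (1:ℝ)) :=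
      (integrableOn_Ioi_rpow_of_lt (by linarith) one_pos).const_mul 2
    refine hb.mono' (Measurable.aestronglyMeasurable (by fun_prop)) ?_
    filter_upwards [ae_restrict_mem measurableSet_Ioi] with y hy
    have hy1 : (1:ℝ) < y := hy
    have hy0 : (0:ℝ) < y := lt_trans one_pos hy1
    have key : y ^ (q - 2*N) = y^q * y^(2:ℕ) / y^(2*(N+1)) := by
      rw [← Real.rpow_natCast y 2, ← Real.rpow_natCast y (2*(N+1)), ← Real.rpow_add hy0,
        ← Real.rpow_sub hy0]
      congr 1; push_cast; ring
    have h_num : |1 - y^2| ≤ 2*y^2 := by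
      rw [abs_of_nonpos (by nlinarith)]; nlinarith
    have h_den : y^(2*(N+1)) ≤ (1+y^2)^(N+1) := by
      rw [pow_mul]; exact pow_le_pow_left₀ (sq_nonneg y) (by nlinarith) _
    calc ‖y ^ q * ((1 - y^2)/(1+y^2)^(N+1))‖
        = y ^ q * (|1 - y^2| / (1+y^2)^(N+1)) := by
          rw [Real.norm_eq_abs, abs_mul, abs_div, abs_of_nonneg (Real.rpow_nonneg hy0.le q),
            abs_of_pos (pow_pos (by positivity : (0:ℝ) < 1 + y^2) (N+1))]
      _ ≤ y ^ q * ((2*y^2) / y^(2*(N+1))) :=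
          mul_le_mul_of_nonneg_left
            (div_le_div₀ (by positivity) h_num (pow_pos hy0 _) h_den)
            (Real.rpow_nonneg hy0.le q)
      _ = 2 * y ^ (q - 2*N) := by rw [key]; ring
  rw [← Ioc_union_Ioi_eq_Ioi (zero_le_one (α := ℝ))]
  exact h1.union h2

theorem stmt_6 (N : ℕ) (hN : 5 ≤ N) (β : ℝ) (hβ : 0 < β) (hβ' : β < (N : ℝ) - 4) :
    Integrable (fun x : EuclideanSpace ℝ (Fin N) =>
        ‖x‖ ^ β * ((1 - ‖x‖ ^ 2) / (1 + ‖x‖ ^ 2) ^ (N + 1))) ∧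
      (∫ x : EuclideanSpace ℝ (Fin N),
        ‖x‖ ^ β * ((1 - ‖x‖ ^ 2) / (1 + ‖x‖ ^ 2) ^ (N + 1))) < 0 := by
  have hβN : β < (N : ℝ) := by
    have : (4:ℝ) ≤ N - 1 := by
      have : (5:ℝ) ≤ N := by exact_mod_cast hN
      linarith
    linarith
  have hN5 : (5:ℝ) ≤ N := by exact_mod_cast hN
  haveI : Nonempty (Fin N) := ⟨⟨0, by omega⟩⟩
  haveI hnt : Nontrivial (EuclideanSpace ℝ (Fin N)) := by
    have h := finrank_euclideanSpace_fin (𝕜 := ℝ) (n := N)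
    exact Module.nontrivial_of_finrank_pos (R := ℝ) (by rw [h]; omega)
  -- Part 1: integrability
  have hint : Integrable (fun x : EuclideanSpace ℝ (Fin N) =>
      ‖x‖ ^ β * ((1 - ‖x‖ ^ 2) / (1 + ‖x‖ ^ 2) ^ (N + 1))) := by
    have hnr : (Module.finrank ℝ (EuclideanSpace ℝ (Fin N)) : ℝ) < 2*N - β := by
      rw [finrank_euclideanSpace_fin]; linarith
    refine (integrable_rpow_neg_one_add_norm_sq (μ := volume) hnr).mono'
      (Measurable.aestronglyMeasurable (by fun_prop)) (Filter.Eventually.of_forall fun x => ?_) 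
    have ht : (0:ℝ) ≤ ‖x‖ := norm_nonneg x
    set t := ‖x‖ with htdef
    have hu : (0:ℝ) < 1 + t^2 := by positivity
    have e1 : t ^ β ≤ (1 + t^2) ^ (β/2) := by
      have : t ^ β = (t^(2:ℕ)) ^ (β/2) := by
        rw [← Real.rpow_natCast t 2, ← Real.rpow_mul ht]
        congr 1
        ring
      rw [this]
      exact Real.rpow_le_rpow (by positivity) (by linarith) (by positivity)
    have e2 : |1 - t^2| ≤ 1 + t^2 := abs_le.2 ⟨by nlinarith, by nlinarith⟩
    have key : (1 + t^2) ^ (β/2) * ((1 + t^2) / (1 + t^2)^(N+1)) = (1 + t^2) ^ (-(2*↑N - β)/2) := by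
      rw [show ((1 + t^2) : ℝ) / (1 + t^2)^(N+1) = (1+t^2)^((1:ℝ)) / (1+t^2)^(((N+1:ℕ)):ℝ) by
          rw [Real.rpow_one, Real.rpow_natCast],
        ← Real.rpow_sub hu, ← Real.rpow_add hu]
      congr 1; push_cast; ring
    calc ‖t ^ β * ((1 - t ^ 2) / (1 + t ^ 2) ^ (N + 1))‖
        = t ^ β * (|1 - t^2| / (1 + t^2)^(N+1)) := by
          rw [Real.norm_eq_abs, abs_mul, abs_div, abs_of_nonneg (Real.rpow_nonneg ht β),
            abs_of_pos (pow_pos hu (N+1))]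
      _ ≤ (1 + t^2) ^ (β/2) * ((1 + t^2) / (1 + t^2)^(N+1)) :=
          mul_le_mul e1 (div_le_div₀ hu.le e2 (pow_pos hu _) le_rfl)
            (by positivity) (by positivity)
      _ = (1 + t^2) ^ (-(2*↑N - β)/2) := key
  refine ⟨hint, ?_⟩
  -- Part 2: negativity
  set R : ℝ → ℝ := fun y => (1 - y^2)/(1+y^2)^(N+1) with hR
  set f : ℝ → ℝ := fun y => y ^ β * R y with hfdef
  set m : ℝ := (N:ℝ) - 1 + β with hm
  set m' : ℝ := (N:ℝ) - 1 - β with hm'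
  set g : ℝ → ℝ := fun y => y ^ m * R y with hgdef
  set h : ℝ → ℝ := fun y => y ^ m' * R y with hhdef
  have hg : IntegrableOn g (Ioi (0:ℝ)) := aux_intOn N m (by simp [hm]; linarith) (by simp [hm]; linarith)
  have hh : IntegrableOn h (Ioi (0:ℝ)) := aux_intOn N m' (by simp [hm']; linarith) (by simp [hm']; linarith)
  -- rewrite the integral in polar form
  have hrw := integral_fun_norm_addHaar (volume : Measure (EuclideanSpace ℝ (Fin N))) f
  rw [finrank_euclideanSpace_fin] at hrw
  have hradial : (∫ y in Ioi (0:ℝ), y ^ (N-1) • f y) = ∫ y in Ioi (0:ℝ), g y := by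
    refine setIntegral_congr_fun measurableSet_Ioi fun y hy => ?_
    have hy0 : (0:ℝ) < y := hy
    simp only [smul_eq_mul, hfdef, hgdef]
    rw [← Real.rpow_natCast y (N-1), Nat.cast_sub (by omega), Nat.cast_one, ← mul_assoc,
      ← Real.rpow_add hy0, hm]
  -- the inversion substitution
  have hinv := integral_comp_rpow_Ioi g (p := (-1:ℝ)) (by norm_num)
  have hpt : ∀ x ∈ Ioi (0:ℝ), (|(-1:ℝ)| * x ^ ((-1:ℝ) - 1)) • g (x ^ (-1:ℝ)) = -(h x) := by
    intro x hx
    have hx0 : (0:ℝ) < x := hx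
    have hx2 : (x:ℝ)^2 ≠ 0 := by positivity
    have hRinv : R (x⁻¹) = -(x^(2*N) * R x) := by
      simp only [hR]
      rw [show (1:ℝ) - (x⁻¹)^2 = -((1 - x^2)/x^2) by field_simp; ring,
        show (1:ℝ) + (x⁻¹)^2 = (1 + x^2)/x^2 by field_simp; ring]
      rw [div_pow, pow_mul]; field_simp
      ring
    have ex : x ^ ((-1:ℝ) - 1) * x ^ (-m) * x ^ ((2*N:ℕ):ℝ) = x ^ m' := by
      rw [← Real.rpow_add hx0, ← Real.rpow_add hx0]
      congr 1
      push_cast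
      rw [hm, hm']
      ring
    calc (|(-1:ℝ)| * x ^ ((-1:ℝ) - 1)) • g (x ^ (-1:ℝ))
        = x ^ ((-1:ℝ) - 1) * ((x⁻¹) ^ m * R (x⁻¹)) := by
          rw [abs_neg, abs_one, one_mul, Real.rpow_neg_one, smul_eq_mul, hgdef]
      _ = x ^ ((-1:ℝ) - 1) * (x ^ (-m) * (-(x^(2*N) * R x))) := by
          rw [Real.inv_rpow hx0.le, ← Real.rpow_neg hx0.le, hRinv]
      _ = -((x ^ ((-1:ℝ) - 1) * x ^ (-m) * x ^ ((2*N:ℕ):ℝ)) * R x) := by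
          rw [Real.rpow_natCast]; ring
      _ = -(h x) := by rw [ex, hhdef]
  have hgh : (∫ y in Ioi (0:ℝ), g y) = - ∫ y in Ioi (0:ℝ), h y := by
    rw [← hinv, setIntegral_congr_fun measurableSet_Ioi hpt, integral_neg]
  have hsub : ∀ x ∈ Ioi (0:ℝ), h x - g x = (x ^ m' - x ^ m) * R x := by
    intro x hx; simp only [hgdef, hhdef]; ring
  have hmm : m' ≤ m := by rw [hm, hm']; linarith
  have hnonneg : 0 ≤ᵐ[volume.restrict (Ioi (0:ℝ))] fun x => h x - g x := by
    filter_upwards [ae_restrict_mem measurableSet_Ioi] with x hx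
    have hx0 : (0:ℝ) < x := hx
    rw [Pi.zero_apply, hsub x hx]
    rcases le_or_gt x 1 with hx1 | hx1
    · have hR0 : 0 ≤ R x := div_nonneg (by nlinarith) (by positivity)
      exact mul_nonneg
        (sub_nonneg.2 (Real.rpow_le_rpow_of_exponent_ge hx0 hx1 hmm)) hR0
    · have hR0 : R x ≤ 0 := div_nonpos_of_nonpos_of_nonneg (by nlinarith) (by positivity)
      have hpw : x ^ m' ≤ x ^ m := Real.rpow_le_rpow_of_exponent_le hx1.le hmm
      nlinarith
  have hsupp : 0 < ∫ x in Ioi (0:ℝ), (h x - g x) := by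
    rw [setIntegral_pos_iff_support_of_nonneg_ae hnonneg (hh.sub hg)]
    refine lt_of_lt_of_le ?_ (measure_mono (?_ : Ioo (1:ℝ) 2 ⊆ _))
    · rw [Real.volume_Ioo]; norm_num
    · intro x hx
      have hx1 : (1:ℝ) < x := hx.1
      have hx0 : (0:ℝ) < x := by linarith
      have hxI : x ∈ Ioi (0:ℝ) := hx0
      refine ⟨?_, hxI⟩
      rw [Function.mem_support, hsub x hxI]
      have hRneg : R x < 0 := div_neg_of_neg_of_pos (by nlinarith) (by positivity)
      have hlt : x ^ m' < x ^ m :=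
        Real.rpow_lt_rpow_of_exponent_lt hx1 (by rw [hm, hm']; linarith)
      exact ne_of_gt (mul_pos_of_neg_of_neg (by linarith) hRneg)
  have h2g : (∫ x in Ioi (0:ℝ), (h x - g x)) = -2 * ∫ y in Ioi (0:ℝ), g y := by
    rw [integral_sub hh hg]; linarith [hgh]
  have hIneg : (∫ y in Ioi (0:ℝ), g y) < 0 := by
    rw [h2g] at hsupp; linarith
  have hgoal : (∫ x : EuclideanSpace ℝ (Fin N),
      ‖x‖ ^ β * ((1 - ‖x‖ ^ 2) / (1 + ‖x‖ ^ 2) ^ (N + 1)))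
      = N • (volume (Metric.ball (0:EuclideanSpace ℝ (Fin N)) 1)).toReal •
        ∫ y in Ioi (0:ℝ), g y := by
    rw [← hradial, ← measureReal_def, ← hrw]
  rw [hgoal, nsmul_eq_mul, smul_eq_mul]
  have hc : 0 < (volume (Metric.ball (0:EuclideanSpace ℝ (Fin N)) 1)).toReal :=
    ENNReal.toReal_pos (Metric.measure_ball_pos volume (0:EuclideanSpace ℝ (Fin N)) one_pos).ne' measure_ball_lt_top.ne
  exact mul_neg_of_pos_of_neg (by exact_mod_cast (by omega : 0 < N))
    (mul_neg_of_pos_of_neg hc hIneg)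
end

section
/- Let N ≥ 5 and σ ∈ (0,1), and suppose K : ℝ^N → ℝ satisfies, near a point z ∈ ℝ^N, K(x) = K(z) + Σ_{i=1}^N a_i |x_i - z_i|^β + O(|x-z|^{β+σ}) with β ∈ (1, N-4). Then for y in a neighborhood of z and λ large, ∫_{ℝ^N} (K(x) - K(z)) · λ^N (1+λ²|x-y|²)^{-N} dx = O(λ^{-β} + |y - z|^β). -/
set_option maxHeartbeats 1000000

open MeasureTheory Real

lemma two_rpow_bound {t u b : ℝ} (ht : 0 ≤ t) (hu : 0 ≤ u) (hb : 0 ≤ b) :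
    (t + u) ^ b ≤ 2 ^ b * (t ^ b + u ^ b) := by
  have h1 : t + u ≤ 2 * max t u := by
    rcases max_cases t u with ⟨h, h'⟩ | ⟨h, h'⟩ <;> rw [h] <;> linarith
  calc (t + u) ^ b ≤ (2 * max t u) ^ b := Real.rpow_le_rpow (by linarith) h1 hb
    _ = 2 ^ b * (max t u) ^ b := Real.mul_rpow (by norm_num) (le_max_iff.2 (Or.inl ht))
    _ ≤ 2 ^ b * (t ^ b + u ^ b) := by
        refine mul_le_mul_of_nonneg_left ?_ (Real.rpow_nonneg (by norm_num) b)
        rcases max_cases t u with ⟨h, _⟩ | ⟨h, _⟩ <;> rw [h]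
        · nlinarith [Real.rpow_nonneg hu b]
        · nlinarith [Real.rpow_nonneg ht b]

lemma aux_integrable (N : ℕ) (b : ℝ) (hb0 : 0 ≤ b) (hbN : b < N) :
    Integrable (fun u : EuclideanSpace ℝ (Fin N) =>
      ‖u‖ ^ b * ((1 : ℝ) + ‖u‖ ^ 2) ^ (-(N : ℝ))) := by
  have hr : (Module.finrank ℝ (EuclideanSpace ℝ (Fin N)) : ℝ) < 2 * N - b := by
    rw [finrank_euclideanSpace_fin]; linarith
  refine (integrable_rpow_neg_one_add_norm_sq hr).mono' ?_ (Filter.Eventually.of_forall fun u => ?_)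
  · apply Measurable.aestronglyMeasurable
    fun_prop
  · have hpos : (0:ℝ) < 1 + ‖u‖ ^ 2 := by positivity
    rw [Real.norm_eq_abs, abs_of_nonneg (by positivity)]
    have h1 : ‖u‖ ^ b ≤ (1 + ‖u‖ ^ 2) ^ (b / 2) := by
      have e : ‖u‖ ^ b = (‖u‖ ^ 2) ^ (b / 2) := by
        rw [← Real.rpow_natCast ‖u‖ 2, ← Real.rpow_mul (norm_nonneg u)]
        congr 1; ring
      rw [e]
      exact Real.rpow_le_rpow (by positivity) (by linarith) (by linarith)
    calc ‖u‖ ^ b * (1 + ‖u‖ ^ 2) ^ (-(N : ℝ))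
        ≤ (1 + ‖u‖ ^ 2) ^ (b / 2) * (1 + ‖u‖ ^ 2) ^ (-(N : ℝ)) :=
          mul_le_mul_of_nonneg_right h1 (Real.rpow_nonneg hpos.le _)
      _ = (1 + ‖u‖ ^ 2) ^ (-(2 * (N:ℝ) - b) / 2) := by
          rw [← Real.rpow_add hpos]; congr 1; ring

lemma aux_scale {N : ℕ} (F : EuclideanSpace ℝ (Fin N) → ℝ) {l : ℝ} (hl : 0 < l)
    (y : EuclideanSpace ℝ (Fin N)) :
    ∫ x, F (l • (x - y)) = (l ^ N)⁻¹ * ∫ u, F u := by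
  rw [show (fun x : EuclideanSpace ℝ (Fin N) => F (l • (x - y)))
      = fun x => (fun v => F (l • v)) (x - y) from rfl]
  rw [integral_sub_right_eq_self (fun v => F (l • v)) y]
  rw [Measure.integral_comp_smul volume F l, finrank_euclideanSpace_fin, smul_eq_mul,
    abs_of_nonneg (inv_nonneg.2 (pow_nonneg hl.le _))]

lemma coord_le_norm {N : ℕ} (v : EuclideanSpace ℝ (Fin N)) (i : Fin N) : |v i| ≤ ‖v‖ := by
  calc |v i| = √((v i) ^ 2) := (Real.sqrt_sq_eq_abs _).symm
    _ ≤ ‖v‖ := by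
        rw [EuclideanSpace.norm_eq]
        apply Real.sqrt_le_sqrt
        have : (v i) ^ 2 = ‖v i‖ ^ 2 := by rw [Real.norm_eq_abs, sq_abs]
        rw [this]
        exact Finset.single_le_sum (f := fun j => ‖v j‖ ^ 2)
          (fun j _ => by positivity) (Finset.mem_univ i)

theorem stmt_17 (N : ℕ) (hN : 5 ≤ N) (σ β : ℝ) (hσ : 0 < σ) (hσ' : σ < 1)
    (hβ : 1 < β) (hβ' : β < (N : ℝ) - 4)
    (K : EuclideanSpace ℝ (Fin N) → ℝ) (z : EuclideanSpace ℝ (Fin N))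
    (a : Fin N → ℝ) (r₀ C M : ℝ) (hr₀ : 0 < r₀) (hC : 0 < C)
    (hloc : ∀ x, ‖x - z‖ ≤ r₀ →
      |K x - K z - ∑ i, a i * |x i - z i| ^ β| ≤ C * ‖x - z‖ ^ (β + σ))
    (hbd : ∀ x, |K x| ≤ M) :
    ∃ μ C' Λ : ℝ, 0 < μ ∧ 0 < C' ∧ 0 < Λ ∧
      ∀ (y : EuclideanSpace ℝ (Fin N)) (l : ℝ), ‖y - z‖ ≤ μ → Λ ≤ l →
        |∫ x, (K x - K z) * (l ^ (N : ℝ) * (1 + l ^ 2 * ‖x - y‖ ^ 2) ^ (-(N : ℝ)))| ≤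
          C' * (l ^ (-β) + ‖y - z‖ ^ β) := by
  have hβ0 : (0:ℝ) < β := lt_trans one_pos hβ
  have hN5 : (5:ℝ) ≤ (N:ℝ) := by exact_mod_cast hN
  have hβN : β < (N:ℝ) := by linarith
  have hM0 : 0 ≤ M := le_trans (abs_nonneg _) (hbd z)
  set A₀ : ℝ := (∑ i, |a i|) + C * r₀ ^ σ with hA₀
  have hA₀0 : 0 < A₀ := by
    have h1 : 0 ≤ ∑ i, |a i| := Finset.sum_nonneg fun i _ => abs_nonneg _
    have h2 : 0 < C * r₀ ^ σ := mul_pos hC (Real.rpow_pos_of_pos hr₀ _)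
    linarith
  set A : ℝ := A₀ * 2 ^ β with hA
  set B : ℝ := A₀ * 2 ^ β + 2 * M * (2 / r₀) ^ β with hB
  have h2β : (0:ℝ) < 2 ^ β := Real.rpow_pos_of_pos (by norm_num) β
  have h2r : (0:ℝ) ≤ (2 / r₀) ^ β := Real.rpow_nonneg (by positivity) β
  have hA0 : 0 < A := mul_pos hA₀0 h2β
  have hB0 : 0 < B := by
    rw [hB]; nlinarith [mul_pos hA₀0 h2β, mul_nonneg hM0 h2r]
  set F₀ : EuclideanSpace ℝ (Fin N) → ℝ := fun u => ((1 : ℝ) + ‖u‖ ^ 2) ^ (-(N : ℝ)) with hF₀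
  set F₁ : EuclideanSpace ℝ (Fin N) → ℝ :=
    fun u => ‖u‖ ^ β * ((1 : ℝ) + ‖u‖ ^ 2) ^ (-(N : ℝ)) with hF₁
  have hF₀int : Integrable F₀ := by
    have h := aux_integrable N 0 le_rfl (by positivity)
    simp only [Real.rpow_zero, one_mul] at h; exact h
  have hF₁int : Integrable F₁ := aux_integrable N β hβ0.le hβN
  set I₀ : ℝ := ∫ u, F₀ u with hI₀
  set I₁ : ℝ := ∫ u, F₁ u with hI₁
  have hI₀0 : 0 ≤ I₀ := integral_nonneg fun u => Real.rpow_nonneg (by positivity) _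
  have hI₁0 : 0 ≤ I₁ := integral_nonneg fun u =>
    mul_nonneg (Real.rpow_nonneg (norm_nonneg _) _) (Real.rpow_nonneg (by positivity) _)
  set C' : ℝ := max (B * I₁) (A * I₀) + 1 with hC'
  have hBI : B * I₁ ≤ C' := le_trans (le_max_left _ _) (by linarith)
  have hAI : A * I₀ ≤ C' := le_trans (le_max_right _ _) (by linarith)
  have hC'0 : 0 < C' := by
    have : (0:ℝ) ≤ max (B * I₁) (A * I₀) :=
      le_trans (mul_nonneg hB0.le hI₁0) (le_max_left _ _)
    linarith
  clear_value A₀ A B C' I₀ I₁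
  refine ⟨r₀ / 2, C', 1, by linarith, hC'0, one_pos, ?_⟩
  intro y l hy hl
  have hl0 : 0 < l := lt_of_lt_of_le one_pos hl
  set W : EuclideanSpace ℝ (Fin N) → ℝ :=
    fun x => l ^ (N : ℝ) * (1 + l ^ 2 * ‖x - y‖ ^ 2) ^ (-(N : ℝ)) with hWdef
  have hW0 : ∀ x, 0 ≤ W x := by
    intro x
    rw [hWdef]
    exact mul_nonneg (Real.rpow_nonneg hl0.le _) (Real.rpow_nonneg (by positivity) _)
  have hnsm : ∀ x : EuclideanSpace ℝ (Fin N), ‖l • (x - y)‖ = l * ‖x - y‖ := by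
    intro x; rw [norm_smul, Real.norm_eq_abs, abs_of_pos hl0]
  have hsq : ∀ x : EuclideanSpace ℝ (Fin N),
      1 + ‖l • (x - y)‖ ^ 2 = 1 + l ^ 2 * ‖x - y‖ ^ 2 := by
    intro x; rw [hnsm x]; ring
  have hWF : ∀ x, W x = l ^ (N : ℝ) * F₀ (l • (x - y)) := by
    intro x
    simp only [hWdef, hF₀]
    rw [hsq x]
  have hWF₁ : ∀ x, ‖x - y‖ ^ β * W x = (l ^ (N : ℝ) * l ^ (-β)) * F₁ (l • (x - y)) := by
    intro x
    simp only [hWdef, hF₁]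
    rw [hsq x, hnsm x, Real.mul_rpow hl0.le (norm_nonneg _)]
    have hc : l ^ (-β) * l ^ β = 1 := by
      rw [← Real.rpow_add hl0]; simp
    calc ‖x - y‖ ^ β * W x
        = (l ^ (-β) * l ^ β) * ‖x - y‖ ^ β * W x := by rw [hc]; ring
      _ = l ^ (N : ℝ) * l ^ (-β) * (l ^ β * ‖x - y‖ ^ β * (1 + l ^ 2 * ‖x - y‖ ^ 2) ^ (-(N : ℝ))) := by
          simp only [hWdef]; ring
  have hgoal : (∫ x, (K x - K z) * (l ^ (N : ℝ) * (1 + l ^ 2 * ‖x - y‖ ^ 2) ^ (-(N : ℝ))))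
      = ∫ x, (K x - K z) * W x := by rw [hWdef]
  rw [hgoal]
  clear_value W
  have hcanc : l ^ (N : ℝ) * (l ^ N)⁻¹ = 1 := by
    rw [Real.rpow_natCast]
    field_simp
  -- integrability
  have hW_int : Integrable W := by
    have h1 : Integrable (fun x : EuclideanSpace ℝ (Fin N) => F₀ (l • (x - y))) :=
      (hF₀int.comp_smul hl0.ne').comp_sub_right y
    have : W = fun x => l ^ (N : ℝ) * F₀ (l • (x - y)) := funext hWF
    rw [this]; exact h1.const_mul _
  have hW₁_int : Integrable (fun x => ‖x - y‖ ^ β * W x) := by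
    have h1 : Integrable (fun x : EuclideanSpace ℝ (Fin N) => F₁ (l • (x - y))) :=
      (hF₁int.comp_smul hl0.ne').comp_sub_right y
    have : (fun x => ‖x - y‖ ^ β * W x)
        = fun x => (l ^ (N : ℝ) * l ^ (-β)) * F₁ (l • (x - y)) := funext hWF₁
    rw [this]; exact h1.const_mul _
  -- integral identities
  have hIW : ∫ x, W x = I₀ := by
    have : (∫ x, W x) = ∫ x, l ^ (N : ℝ) * F₀ (l • (x - y)) := by
      congr 1; exact funext hWF
    rw [this, integral_const_mul, aux_scale F₀ hl0 y, ← mul_assoc, hcanc, one_mul, hI₀]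
  have hIW₁ : ∫ x, ‖x - y‖ ^ β * W x = l ^ (-β) * I₁ := by
    have : (∫ x, ‖x - y‖ ^ β * W x)
        = ∫ x, (l ^ (N : ℝ) * l ^ (-β)) * F₁ (l • (x - y)) := by
      congr 1; exact funext hWF₁
    rw [this, integral_const_mul, aux_scale F₁ hl0 y, hI₁]
    rw [show l ^ (N : ℝ) * l ^ (-β) * ((l ^ N)⁻¹ * ∫ u, F₁ u)
        = (l ^ (N : ℝ) * (l ^ N)⁻¹) * (l ^ (-β) * ∫ u, F₁ u) from by ring, hcanc, one_mul]
  -- key pointwise bound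
  have hkey : ∀ x, |K x - K z| ≤ B * ‖x - y‖ ^ β + A * ‖y - z‖ ^ β := by
    intro x
    have htri : ‖x - z‖ ≤ ‖x - y‖ + ‖y - z‖ := by
      have e : x - z = (x - y) + (y - z) := by abel
      rw [e]; exact norm_add_le _ _
    have hxyβ : 0 ≤ ‖x - y‖ ^ β := Real.rpow_nonneg (norm_nonneg _) β
    have hyzβ : 0 ≤ ‖y - z‖ ^ β := Real.rpow_nonneg (norm_nonneg _) β
    by_cases hx : ‖x - z‖ ≤ r₀
    · have h1 := hloc x hx
      have hsum : |∑ i, a i * |x i - z i| ^ β| ≤ (∑ i, |a i|) * ‖x - z‖ ^ β := by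
        calc |∑ i, a i * |x i - z i| ^ β| ≤ ∑ i, |a i * |x i - z i| ^ β| :=
              Finset.abs_sum_le_sum_abs _ _
          _ = ∑ i, |a i| * |x i - z i| ^ β := by
              refine Finset.sum_congr rfl fun i _ => ?_
              rw [abs_mul, abs_of_nonneg (Real.rpow_nonneg (abs_nonneg _) β)]
          _ ≤ ∑ i, |a i| * ‖x - z‖ ^ β := by
              refine Finset.sum_le_sum fun i _ => ?_
              refine mul_le_mul_of_nonneg_left ?_ (abs_nonneg _)
              have hc : |x i - z i| ≤ ‖x - z‖ := by
                have e : x i - z i = (x - z) i := rfl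
                rw [e]; exact coord_le_norm (x - z) i
              exact Real.rpow_le_rpow (abs_nonneg _) hc hβ0.le
          _ = (∑ i, |a i|) * ‖x - z‖ ^ β := (Finset.sum_mul _ _ _).symm
      have hC2 : C * ‖x - z‖ ^ (β + σ) ≤ C * r₀ ^ σ * ‖x - z‖ ^ β := by
        have e : ‖x - z‖ ^ (β + σ) = ‖x - z‖ ^ β * ‖x - z‖ ^ σ :=
          Real.rpow_add' (norm_nonneg _) (by positivity)
        have hσle : ‖x - z‖ ^ σ ≤ r₀ ^ σ := Real.rpow_le_rpow (norm_nonneg _) hx hσ.le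
        have hxzβ : 0 ≤ ‖x - z‖ ^ β := Real.rpow_nonneg (norm_nonneg _) β
        rw [e]
        calc C * (‖x - z‖ ^ β * ‖x - z‖ ^ σ) ≤ C * (‖x - z‖ ^ β * r₀ ^ σ) := by
              refine mul_le_mul_of_nonneg_left ?_ hC.le
              exact mul_le_mul_of_nonneg_left hσle hxzβ
          _ = C * r₀ ^ σ * ‖x - z‖ ^ β := by ring
      have h2 : |K x - K z| ≤ A₀ * ‖x - z‖ ^ β := by
        have habs : |K x - K z| ≤ |K x - K z - ∑ i, a i * |x i - z i| ^ β|
            + |∑ i, a i * |x i - z i| ^ β| := by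
          have := abs_add_le (K x - K z - ∑ i, a i * |x i - z i| ^ β)
            (∑ i, a i * |x i - z i| ^ β)
          simpa using this
        calc |K x - K z| ≤ C * ‖x - z‖ ^ (β + σ) + (∑ i, |a i|) * ‖x - z‖ ^ β := by
              linarith
          _ ≤ C * r₀ ^ σ * ‖x - z‖ ^ β + (∑ i, |a i|) * ‖x - z‖ ^ β := by linarith
          _ = A₀ * ‖x - z‖ ^ β := by rw [hA₀]; ring
      have h4 : ‖x - z‖ ^ β ≤ 2 ^ β * (‖x - y‖ ^ β + ‖y - z‖ ^ β) := by
        calc ‖x - z‖ ^ β ≤ (‖x - y‖ + ‖y - z‖) ^ β :=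
              Real.rpow_le_rpow (norm_nonneg _) htri hβ0.le
          _ ≤ 2 ^ β * (‖x - y‖ ^ β + ‖y - z‖ ^ β) :=
              two_rpow_bound (norm_nonneg _) (norm_nonneg _) hβ0.le
      have h5 : |K x - K z| ≤ A * ‖x - y‖ ^ β + A * ‖y - z‖ ^ β := by
        calc |K x - K z| ≤ A₀ * ‖x - z‖ ^ β := h2
          _ ≤ A₀ * (2 ^ β * (‖x - y‖ ^ β + ‖y - z‖ ^ β)) :=
              mul_le_mul_of_nonneg_left h4 hA₀0.le
          _ = A * ‖x - y‖ ^ β + A * ‖y - z‖ ^ β := by rw [hA]; ring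
      have hAB : A * ‖x - y‖ ^ β ≤ B * ‖x - y‖ ^ β := by
        refine mul_le_mul_of_nonneg_right ?_ hxyβ
        rw [hA, hB]; linarith [mul_nonneg hM0 h2r]
      linarith
    · push_neg at hx
      have hxy : r₀ / 2 ≤ ‖x - y‖ := by linarith
      have h1 : (1:ℝ) ≤ (2 / r₀) ^ β * ‖x - y‖ ^ β := by
        rw [← Real.mul_rpow (by positivity) (norm_nonneg _)]
        refine Real.one_le_rpow ?_ hβ0.le
        have e : (2 / r₀) * (r₀ / 2) = 1 := by field_simp
        calc (1:ℝ) = (2 / r₀) * (r₀ / 2) := e.symm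
          _ ≤ (2 / r₀) * ‖x - y‖ := by
              exact mul_le_mul_of_nonneg_left hxy (by positivity)
      have h2 : |K x - K z| ≤ 2 * M := by
        calc |K x - K z| ≤ |K x| + |K z| := by
              simpa [sub_eq_add_neg, abs_neg] using abs_add_le (K x) (-(K z))
          _ ≤ 2 * M := by linarith [hbd x, hbd z]
      calc |K x - K z| ≤ 2 * M := h2
        _ ≤ 2 * M * ((2 / r₀) ^ β * ‖x - y‖ ^ β) := by
            linarith [mul_nonneg hM0 (sub_nonneg.2 h1)]
        _ ≤ B * ‖x - y‖ ^ β + A * ‖y - z‖ ^ β := by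
            rw [hB]
            linarith [mul_nonneg (mul_pos hA₀0 h2β).le hxyβ, mul_nonneg hA0.le hyzβ]
  -- main chain
  have hg_int : Integrable (fun x => B * (‖x - y‖ ^ β * W x) + (A * ‖y - z‖ ^ β) * W x) :=
    (hW₁_int.const_mul B).add (hW_int.const_mul _)
  have step1 : |∫ x, (K x - K z) * W x| ≤ ∫ x, |K x - K z| * |W x| := by
    simpa [Real.norm_eq_abs, abs_mul] using
      norm_integral_le_integral_norm (fun x => (K x - K z) * W x) (μ := volume)
  have step2 : ∫ x, |K x - K z| * |W x|
      ≤ ∫ x, (B * (‖x - y‖ ^ β * W x) + (A * ‖y - z‖ ^ β) * W x) := by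
    refine integral_mono_of_nonneg
      (Filter.Eventually.of_forall fun x => mul_nonneg (abs_nonneg _) (abs_nonneg _)) hg_int
      (Filter.Eventually.of_forall fun x => ?_)
    simp only [abs_of_nonneg (hW0 x)]
    calc |K x - K z| * W x ≤ (B * ‖x - y‖ ^ β + A * ‖y - z‖ ^ β) * W x :=
          mul_le_mul_of_nonneg_right (hkey x) (hW0 x)
      _ = B * (‖x - y‖ ^ β * W x) + (A * ‖y - z‖ ^ β) * W x := by ring
  have step3 : ∫ x, (B * (‖x - y‖ ^ β * W x) + (A * ‖y - z‖ ^ β) * W x)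
      = B * (l ^ (-β) * I₁) + (A * ‖y - z‖ ^ β) * I₀ := by
    rw [integral_add (hW₁_int.const_mul B) (hW_int.const_mul _), integral_const_mul,
      integral_const_mul, hIW, hIW₁]
  have step4 : B * (l ^ (-β) * I₁) + (A * ‖y - z‖ ^ β) * I₀ ≤ C' * (l ^ (-β) + ‖y - z‖ ^ β) := by
    have hlβ : 0 ≤ l ^ (-β) := Real.rpow_nonneg hl0.le _
    have hyzβ : 0 ≤ ‖y - z‖ ^ β := Real.rpow_nonneg (norm_nonneg _) β
    nlinarith [mul_nonneg (sub_nonneg.2 hBI) hlβ, mul_nonneg (sub_nonneg.2 hAI) hyzβ]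
  calc |∫ x, (K x - K z) * W x| ≤ ∫ x, |K x - K z| * |W x| := step1
    _ ≤ _ := step2
    _ = _ := step3
    _ ≤ _ := step4
end
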